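/- arXiv:0709.2171 — 2 statements merged into one kernel-verified Lean document; each statement's English description precedes it below -/
import Mathlib

section
/- Let λ ≥ 1, t₀ ∈ ℝ, and let h : ℝ → ℝ be continuously differentiable with h(s) = 0 for all s ≤ t₀. Define u(t) = ∫_{t₀}^{t} (sin(√λ·(t − s))/√λ)·h(s) ds. Then for every t ≥ t₀, (λ + 1)·u(t)² ≤ 8·( (λ + 1)⁻¹·h(t)² + (t − t₀)·(λ + 1)⁻¹·∫_{t₀}^{t} h'(s)² ds ). -/
open MeasureTheory intervalIntegral

theorem duhamel_energy_estimate
    (lam t₀ : ℝ) (hlam : 1 ≤ lam) (h : ℝ → ℝ)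
    (hh : ContDiff ℝ 1 h) (hh0 : ∀ s ≤ t₀, h s = 0)
    (u : ℝ → ℝ)
    (hu : ∀ t : ℝ, u t = ∫ s in t₀..t,
      (Real.sin (Real.sqrt lam * (t - s)) / Real.sqrt lam) * h s) :
    ∀ t ≥ t₀,
      (lam + 1) * (u t) ^ 2 ≤
        8 * ((lam + 1)⁻¹ * (h t) ^ 2
          + (t - t₀) * (lam + 1)⁻¹ * ∫ s in t₀..t, (deriv h s) ^ 2) := by
  intro t ht
  set a := Real.sqrt lam with ha_def
  have hlam0 : (0:ℝ) < lam := by linarith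
  have ha0 : 0 < a := Real.sqrt_pos.mpr hlam0
  have ha2 : a ^ 2 = lam := Real.sq_sqrt hlam0.le
  have hhd : Differentiable ℝ h := hh.differentiable one_ne_zero
  have hdc : Continuous (deriv h) := hh.continuous_deriv le_rfl
  -- the integrand with cosine
  set f : ℝ → ℝ := fun s => Real.cos (a * (t - s)) * deriv h s with hf_def
  have hfc : Continuous f := by
    apply Continuous.mul _ hdc
    exact Real.continuous_cos.comp (continuous_const.mul (continuous_const.sub continuous_id))
  set J : ℝ := ∫ s in t₀..t, f s with hJ_def
  -- integration by parts: lam * u t = h t - J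
  have key : lam * u t = h t - J := by
    set F : ℝ → ℝ := fun s => Real.cos (a * (t - s)) / lam * h s with hF_def
    set g : ℝ → ℝ := fun s =>
      Real.sin (a * (t - s)) / a * h s + Real.cos (a * (t - s)) / lam * deriv h s with hg_def
    have hder : ∀ s ∈ Set.uIcc t₀ t, HasDerivAt F (g s) s := by
      intro s _
      have h1 : HasDerivAt (fun s : ℝ => a * (t - s)) (a * (0 - 1)) s :=
        (((hasDerivAt_const s t).sub (hasDerivAt_id s))).const_mul a
      have h2 : HasDerivAt (fun s : ℝ => Real.cos (a * (t - s)))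
          (-Real.sin (a * (t - s)) * (a * (0 - 1))) s :=
        by have := (Real.hasDerivAt_cos (a * (t - s))).comp s h1; exact this
      have h3 : HasDerivAt F (-Real.sin (a * (t - s)) * (a * (0 - 1)) / lam * h s
          + Real.cos (a * (t - s)) / lam * deriv h s) s :=
        ((h2.div_const lam).mul (hhd s).hasDerivAt)
      convert h3 using 1
      show Real.sin (a * (t - s)) / a * h s + Real.cos (a * (t - s)) / lam * deriv h s = _
      have : Real.sin (a * (t - s)) / a = a * Real.sin (a * (t - s)) / lam := by
        rw [← ha2]; field_simp
      rw [this]; ring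
    have hgint : IntervalIntegrable g volume t₀ t := by
      apply Continuous.intervalIntegrable
      apply Continuous.add
      · exact ((Real.continuous_sin.comp
          (continuous_const.mul (continuous_const.sub continuous_id))).div_const a).mul
          hhd.continuous
      · exact ((Real.continuous_cos.comp
          (continuous_const.mul (continuous_const.sub continuous_id))).div_const lam).mul hdc
    have hFTC : ∫ s in t₀..t, g s = F t - F t₀ :=
      integral_eq_sub_of_hasDerivAt hder hgint
    have hFt : F t = h t / lam := by simp [hF_def]; rw [inv_mul_eq_div]
    have hFt₀ : F t₀ = 0 := by simp [hF_def, hh0 t₀ le_rfl]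
    have hsplit : ∫ s in t₀..t, g s =
        (∫ s in t₀..t, Real.sin (a * (t - s)) / a * h s)
          + ∫ s in t₀..t, Real.cos (a * (t - s)) / lam * deriv h s := by
      apply intervalIntegral.integral_add
      · exact (((Real.continuous_sin.comp
          (continuous_const.mul (continuous_const.sub continuous_id))).div_const a).mul
          hhd.continuous).intervalIntegrable _ _
      · exact (((Real.continuous_cos.comp
          (continuous_const.mul (continuous_const.sub continuous_id))).div_const lam).mul
          hdc).intervalIntegrable _ _
    have hcosint : ∫ s in t₀..t, Real.cos (a * (t - s)) / lam * deriv h s = lam⁻¹ * J := by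
      rw [hJ_def, ← intervalIntegral.integral_const_mul]
      congr 1; funext s; simp [hf_def]; ring
    have hu' : u t = ∫ s in t₀..t, Real.sin (a * (t - s)) / a * h s := hu t
    rw [hsplit, hFt, hFt₀, hcosint, ← hu'] at hFTC
    field_simp at hFTC ⊢
    linarith
  -- Cauchy–Schwarz: J ^ 2 ≤ (t - t₀) * ∫ (deriv h) ^ 2
  set B : ℝ := ∫ s in t₀..t, (deriv h s) ^ 2 with hB_def
  have hBnonneg : 0 ≤ B :=
    intervalIntegral.integral_nonneg ht (fun s _ => sq_nonneg _)
  have hf2int : IntervalIntegrable (fun s => f s ^ 2) volume t₀ t :=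
    (hfc.pow 2).intervalIntegrable _ _
  have hfint : IntervalIntegrable f volume t₀ t := hfc.intervalIntegrable _ _
  have hf2leB : ∫ s in t₀..t, f s ^ 2 ≤ B := by
    apply intervalIntegral.integral_mono_on ht hf2int
      ((hdc.pow 2).intervalIntegrable _ _)
    intro s _
    have hc1 : Real.cos (a * (t - s)) ^ 2 ≤ 1 := by
      have := Real.neg_one_le_cos (a * (t - s))
      have := Real.cos_le_one (a * (t - s))
      nlinarith
    simp only [hf_def, Pi.pow_apply]
    nlinarith [sq_nonneg (deriv h s)]
  have hCS : J ^ 2 ≤ (t - t₀) * B := by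
    rcases eq_or_lt_of_le ht with heq | hlt
    · have : J = 0 := by rw [hJ_def, ← heq, intervalIntegral.integral_same]
      simp [this, ← heq]
    · have hL : 0 < t - t₀ := by linarith
      set c : ℝ := J / (t - t₀) with hc_def
      have h0 : 0 ≤ ∫ s in t₀..t, (f s - c) ^ 2 :=
        intervalIntegral.integral_nonneg ht (fun s _ => sq_nonneg _)
      have hexp : ∫ s in t₀..t, (f s - c) ^ 2
          = (∫ s in t₀..t, f s ^ 2) - 2 * c * J + c ^ 2 * (t - t₀) := by
        have e1 : ∀ s, (f s - c) ^ 2 = f s ^ 2 - (2 * c) * f s + c ^ 2 := by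
          intro s; ring
        simp_rw [e1]
        rw [intervalIntegral.integral_add (hf2int.sub (hfint.const_mul (2*c)))
             (intervalIntegrable_const),
           intervalIntegral.integral_sub hf2int (hfint.const_mul (2*c)),
           intervalIntegral.integral_const_mul, intervalIntegral.integral_const]
        simp [hJ_def]; ring
      rw [hexp] at h0
      have hIf2 : J ^ 2 ≤ (t - t₀) * ∫ s in t₀..t, f s ^ 2 := by
        have hc2 : c * (t - t₀) = J := by
          rw [hc_def]; field_simp
        nlinarith [h0, hL]
      calc J ^ 2 ≤ (t - t₀) * ∫ s in t₀..t, f s ^ 2 := hIf2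
        _ ≤ (t - t₀) * B := by
            exact mul_le_mul_of_nonneg_left hf2leB hL.le
  -- final algebra
  have hL1 : (0:ℝ) < lam + 1 := by linarith
  have hP : (lam + 1)⁻¹ * (lam + 1) = 1 := inv_mul_cancel₀ (ne_of_gt hL1)
  have h2 : lam ^ 2 * (u t) ^ 2 = (h t - J) ^ 2 := by rw [← key]; ring
  have h3 : (h t - J) ^ 2 ≤ 2 * (h t) ^ 2 + 2 * J ^ 2 := by
    nlinarith [sq_nonneg (h t + J)]
  have h4 : (lam + 1) ^ 2 * (u t) ^ 2 ≤ 4 * (lam ^ 2 * (u t) ^ 2) := by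
    nlinarith [sq_nonneg (u t), sq_nonneg (lam - 1)]
  have h5 : (lam + 1) ^ 2 * (u t) ^ 2 ≤ 8 * (h t) ^ 2 + 8 * ((t - t₀) * B) := by
    nlinarith
  have h6 : (lam + 1) * (u t) ^ 2
      = (lam + 1)⁻¹ * ((lam + 1) ^ 2 * (u t) ^ 2) := by
    field_simp
  rw [h6]
  calc (lam + 1)⁻¹ * ((lam + 1) ^ 2 * (u t) ^ 2)
      ≤ (lam + 1)⁻¹ * (8 * (h t) ^ 2 + 8 * ((t - t₀) * B)) :=
        mul_le_mul_of_nonneg_left h5 (inv_nonneg.mpr hL1.le)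
    _ = 8 * ((lam + 1)⁻¹ * (h t) ^ 2 + (t - t₀) * (lam + 1)⁻¹ * B) := by ring
end

section
/- Let H be a complex Hilbert space, (e_j)_{j∈ℕ} a Hilbert basis of H, and A : H → H a continuous linear map with A e_j = λ_j • e_j for every j, where λ_j ≥ 0 are nonnegative reals. For λ ≥ 0 and t ∈ ℝ set g(λ, t) = sin(√λ·t)/√λ if λ > 0 and g(0, t) = t. Then for every ψ ∈ H and every t ∈ ℝ the family ( g(λ_j, t)·⟪e_j, ψ⟫ • e_j )_{j∈ℕ} is summable in H; denoting its sum by E(t), one has E(0) = 0, the map t ↦ E(t) is twice differentiable with second derivative E''(t) = −A(E(t)) for all t, and the derivative of E at 0 equals ψ. -/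
open scoped InnerProductSpace

/-- The wave kernel `g(λ, t) = sin(√λ t)/√λ` for `λ > 0` and `g(0, t) = t`. -/
noncomputable def waveKernel (l t : ℝ) : ℝ :=
  if 0 < l then Real.sin (Real.sqrt l * t) / Real.sqrt l else t

open scoped Nat

noncomputable def cR (n : ℕ) : ℝ := (-1)^n / (2*n+1)!

lemma hasSum_waveKernel (l t : ℝ) (hl : 0 ≤ l) :
    HasSum (fun n : ℕ => cR n * (l ^ n * t ^ (2*n+1))) (waveKernel l t) := by
  unfold waveKernel
  rcases lt_or_eq_of_le hl with h | h
  · rw [if_pos h]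
    have hs : Real.sqrt l ≠ 0 := by positivity
    have := (Real.hasSum_sin (Real.sqrt l * t)).div_const (Real.sqrt l)
    have key : (fun n : ℕ => cR n * (l ^ n * t ^ (2*n+1)))
        = fun n => (-1) ^ n * (Real.sqrt l * t) ^ (2 * n + 1) / ((2 * n + 1)! : ℝ) / Real.sqrt l := by
     funext n
     have h1 : Real.sqrt l ^ (2*n+1) = l ^ n * Real.sqrt l := by
      rw [pow_succ, pow_mul, Real.sq_sqrt hl]
     rw [mul_pow, h1, cR]
     have hf : ((2*n+1)! : ℝ) ≠ 0 := by positivity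
     field_simp
    rw [key]; exact this
  · rw [if_neg (by rw [← h]; exact lt_irrefl 0), ← h]
    have := hasSum_single (f := fun n : ℕ => cR n * ((0:ℝ) ^ n * t ^ (2*n+1))) 0
      (by intro b hb; simp [zero_pow hb])
    simpa [cR] using this

section innerlemmas
set_option linter.unusedSectionVars false
variable {H : Type*} [NormedAddCommGroup H] [InnerProductSpace ℂ H] [CompleteSpace H]
  (e : HilbertBasis ℕ ℂ H) (A : H →L[ℂ] H) (lam : ℕ → ℝ)

-- key: inner product with basis diagonalizes A
lemma inner_basis_A (hA : ∀ j, A (e j) = (lam j : ℂ) • e j) (x : H) (j : ℕ) :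
    ⟪(e j : H), A x⟫_ℂ = (lam j : ℂ) * ⟪(e j : H), x⟫_ℂ := by
  have h2 : HasSum (fun i => e.repr x i • A (e i)) (A x) := by
    have := (e.hasSum_repr x).mapL A
    simpa [A.map_smul] using this
  have h3 : HasSum (fun i => ⟪(e j : H), e.repr x i • A (e i)⟫_ℂ) ⟪(e j : H), A x⟫_ℂ :=
    h2.mapL (innerSL ℂ (e j))
  have hoi := orthonormal_iff_ite.mp e.orthonormal (i := j)
  have h4 : (fun i => ⟪(e j : H), e.repr x i • A (e i)⟫_ℂ)
      = fun i => if i = j then (lam j : ℂ) * ⟪(e j : H), x⟫_ℂ else 0 := by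
    funext i
    rw [hA i, inner_smul_right, inner_smul_right, hoi i]
    rcases eq_or_ne i j with rfl | hij
    · rw [e.repr_apply_apply, if_pos rfl, if_pos rfl]
      ring
    · rw [if_neg (fun h => hij h.symm), if_neg hij]
      ring
  rw [h4] at h3
  exact h3.unique (hasSum_ite_eq j _)

lemma inner_basis_pow (hA : ∀ j, A (e j) = (lam j : ℂ) • e j) (x : H) (j : ℕ) (n : ℕ) :
    ⟪(e j : H), (A^n) x⟫_ℂ = (lam j : ℂ)^n * ⟪(e j : H), x⟫_ℂ := by
  induction n with
  | zero => simp
  | succ n ih =>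
    rw [pow_succ', ContinuousLinearMap.mul_apply, inner_basis_A e A lam hA,
      ih, pow_succ']
    ring

end innerlemmas

section bounds
set_option linter.unusedSectionVars false
variable {H : Type*} [NormedAddCommGroup H] [InnerProductSpace ℂ H] [CompleteSpace H]
  (A : H →L[ℂ] H) (ψ : H)

-- norm bound on the coefficients
lemma norm_a_le (n : ℕ) : ‖cR n • ((A^n) ψ)‖ ≤ ‖A‖^n * ‖ψ‖ / (2*n+1)! := by
  have h1 : ‖(A^n) ψ‖ ≤ ‖A‖^n * ‖ψ‖ := by
    induction n with
    | zero => simp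
    | succ n ih =>
      rw [pow_succ', ContinuousLinearMap.mul_apply]
      calc ‖A ((A^n) ψ)‖ ≤ ‖A‖ * ‖(A^n) ψ‖ := A.le_opNorm _
        _ ≤ ‖A‖ * (‖A‖^n * ‖ψ‖) := by
            exact mul_le_mul_of_nonneg_left ih (norm_nonneg A)
        _ = ‖A‖^(n+1) * ‖ψ‖ := by ring
  have h2 : ‖cR n‖ = 1 / (2*n+1)! := by
    rw [cR]
    simp [abs_div]
  rw [norm_smul, h2]
  rw [div_mul_eq_mul_div, one_mul, div_le_div_iff_of_pos_right (by positivity)]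
  exact h1

-- master bound: for |y| ≤ R with 1 ≤ R,
lemma bound_master (R : ℝ) (hR : 1 ≤ R) (n : ℕ) (y : ℝ) (hy : |y| ≤ R) :
    ((2*n+1 : ℝ)) * |y|^(2*n) * (‖A‖^n * ‖ψ‖ / (2*n+1)!)
      ≤ ‖ψ‖ * (R^2*‖A‖)^n / n ! := by
  have hA0 : (0:ℝ) ≤ ‖A‖ := norm_nonneg _
  have hy0 : (0:ℝ) ≤ |y| := abs_nonneg _
  have hfac : ((2*n+1 : ℝ)) / (2*n+1)! = 1 / (2*n)! := by
    rw [Nat.factorial_succ]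
    push_cast
    rw [div_mul_eq_div_div, div_self (by positivity)]
  have hfle : (n ! : ℝ) ≤ (2*n)! := by
    exact_mod_cast Nat.factorial_le (by omega)
  calc ((2*n+1 : ℝ)) * |y|^(2*n) * (‖A‖^n * ‖ψ‖ / (2*n+1)!)
      = |y|^(2*n) * ‖A‖^n * ‖ψ‖ * ((2*n+1 : ℝ) / (2*n+1)!) := by ring
    _ = |y|^(2*n) * ‖A‖^n * ‖ψ‖ / (2*n)! := by rw [hfac]; ring
    _ ≤ R^(2*n) * ‖A‖^n * ‖ψ‖ / (n)! := by
        apply div_le_div₀ (by positivity)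
        · gcongr
        · positivity
        · exact hfle
    _ = ‖ψ‖ * (R^2*‖A‖)^n / n ! := by rw [mul_pow, ← pow_mul]; ring

end bounds

section analytic
set_option linter.unusedSectionVars false
variable {H : Type*} [NormedAddCommGroup H] [InnerProductSpace ℂ H] [CompleteSpace H]
  (A : H →L[ℂ] H) (ψ : H)

noncomputable def aW (n : ℕ) : H := cR n • ((A^n) ψ)

lemma bound_master0 (R : ℝ) (hR : 1 ≤ R) (n : ℕ) (y : ℝ) (hy : |y| ≤ R) :
    |y|^(2*n+1) * (‖A‖^n * ‖ψ‖ / (2*n+1)!)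
      ≤ R * (‖ψ‖ * (R^2*‖A‖)^n / n !) := by
  have hA0 : (0:ℝ) ≤ ‖A‖ := norm_nonneg _
  have hfle : (n ! : ℝ) ≤ (2*n+1)! := by exact_mod_cast Nat.factorial_le (by omega)
  calc |y|^(2*n+1) * (‖A‖^n * ‖ψ‖ / (2*n+1)!)
      ≤ R^(2*n+1) * (‖A‖^n * ‖ψ‖ / (n)!) := by
        gcongr
    _ = R * (‖ψ‖ * ((R^2)^n*‖A‖^n) / n !) := by rw [pow_succ, ← pow_mul]; ring
    _ = R * (‖ψ‖ * (R^2*‖A‖)^n / n !) := by rw [mul_pow]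

lemma bound_master2 (R : ℝ) (hR : 1 ≤ R) (n : ℕ) (y : ℝ) (hy : |y| ≤ R) :
    ((2*n+1 : ℝ)) * (((2*n : ℕ)) * |y|^(2*n-1)) * (‖A‖^n * ‖ψ‖ / (2*n+1)!)
      ≤ ‖ψ‖ * (R^2*‖A‖)^n / n ! := by
  have hA0 : (0:ℝ) ≤ ‖A‖ := norm_nonneg _
  rcases Nat.eq_zero_or_pos n with rfl | hn
  · simp
  · obtain ⟨m, rfl⟩ : ∃ m, n = m + 1 := ⟨n - 1, by omega⟩
    have hfac : ((2*(m+1)+1)! : ℝ) = (2*(m+1)+1) * (2*(m+1)) * (2*m+1)! := by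
      have : 2*(m+1)+1 = (2*m+1) + 1 + 1 := by omega
      rw [this, Nat.factorial_succ, Nat.factorial_succ]
      push_cast
      ring
    have hfle : ((m+1) ! : ℝ) ≤ (2*m+1)! := by
      exact_mod_cast Nat.factorial_le (by omega)
    refine le_trans (le_of_eq (?_ : _ = |y|^(2*m+1) * ‖A‖^(m+1) * ‖ψ‖ / ((2*m+1)! : ℝ))) ?_
    · rw [show 2*(m+1)-1 = 2*m+1 from by omega, hfac]
      have hne1 : (2*(m:ℝ)+2+1 : ℝ) ≠ 0 := by positivity
      have hne2 : (2*(m:ℝ)+2 : ℝ) ≠ 0 := by positivity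
      have hne3 : ((2*m+1)! : ℝ) ≠ 0 := by positivity
      push_cast
      field_simp
    calc |y|^(2*m+1) * ‖A‖^(m+1) * ‖ψ‖ / ((2*m+1)! : ℝ)
        ≤ R^(2*(m+1)) * ‖A‖^(m+1) * ‖ψ‖ / ((m+1))! := by
          apply div_le_div₀ (by positivity) ?_ (by positivity) hfle
          gcongr ?_ * _ * _
          calc |y|^(2*m+1) ≤ R^(2*m+1) := by gcongr
            _ ≤ R^(2*(m+1)) := by
                apply pow_le_pow_right₀ hR; omega
      _ = ‖ψ‖ * (R^2*‖A‖)^(m+1) / (m+1)! := by rw [mul_pow, ← pow_mul]; ring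

end analytic
section deriv
set_option linter.unusedSectionVars false
variable {H : Type*} [NormedAddCommGroup H] [InnerProductSpace ℂ H] [CompleteSpace H]
  (A : H →L[ℂ] H) (ψ : H)

lemma summable_u (R : ℝ) : Summable (fun n : ℕ => ‖ψ‖ * (R^2*‖A‖)^n / n !) := by
  simpa [mul_div_assoc] using (Real.summable_pow_div_factorial (R^2*‖A‖)).mul_left ‖ψ‖

lemma norm_aW_le (n : ℕ) : ‖aW A ψ n‖ ≤ ‖A‖^n * ‖ψ‖ / (2*n+1)! :=
  norm_a_le A ψ n

lemma norm_term_F_le (R : ℝ) (hR : 1 ≤ R) (n : ℕ) (y : ℝ) (hy : |y| ≤ R) :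
    ‖y^(2*n+1) • aW A ψ n‖ ≤ R * (‖ψ‖ * (R^2*‖A‖)^n / n !) := by
  rw [norm_smul, Real.norm_eq_abs, abs_pow]
  refine le_trans ?_ (bound_master0 A ψ R hR n y hy)
  exact mul_le_mul_of_nonneg_left (norm_aW_le A ψ n) (by positivity)

lemma norm_term_F1_le (R : ℝ) (hR : 1 ≤ R) (n : ℕ) (y : ℝ) (hy : |y| ≤ R) :
    ‖((2*n+1 : ℝ) * y^(2*n)) • aW A ψ n‖ ≤ ‖ψ‖ * (R^2*‖A‖)^n / n ! := by
  rw [norm_smul, Real.norm_eq_abs, abs_mul, abs_pow,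
    abs_of_nonneg (by positivity : (0:ℝ) ≤ (2*n+1 : ℝ))]
  refine le_trans ?_ (bound_master A ψ R hR n y hy)
  exact mul_le_mul_of_nonneg_left (norm_aW_le A ψ n) (by positivity)

lemma norm_term_F2_le (R : ℝ) (hR : 1 ≤ R) (n : ℕ) (y : ℝ) (hy : |y| ≤ R) :
    ‖((2*n+1 : ℝ) * (((2*n : ℕ) : ℝ) * y^(2*n-1))) • aW A ψ n‖
      ≤ ‖ψ‖ * (R^2*‖A‖)^n / n ! := by
  rw [norm_smul, Real.norm_eq_abs, abs_mul, abs_mul, abs_pow,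
    abs_of_nonneg (by positivity : (0:ℝ) ≤ (2*n+1 : ℝ)),
    abs_of_nonneg (by positivity : (0:ℝ) ≤ ((2*n : ℕ) : ℝ))]
  refine le_trans ?_ (bound_master2 A ψ R hR n y hy)
  exact mul_le_mul_of_nonneg_left (norm_aW_le A ψ n) (by positivity)

lemma summable_F (t : ℝ) : Summable (fun n : ℕ => t^(2*n+1) • aW A ψ n) := by
  have hR : 1 ≤ |t| + 1 := by linarith [abs_nonneg t]
  exact Summable.of_norm_bounded ((summable_u A ψ (|t|+1)).mul_left (|t|+1))
    (fun n => norm_term_F_le A ψ (|t|+1) hR n t (by linarith [abs_nonneg t]))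

lemma summable_F1 (t : ℝ) : Summable (fun n : ℕ => ((2*n+1 : ℝ) * t^(2*n)) • aW A ψ n) := by
  have hR : 1 ≤ |t| + 1 := by linarith [abs_nonneg t]
  exact Summable.of_norm_bounded (summable_u A ψ (|t|+1))
    (fun n => norm_term_F1_le A ψ (|t|+1) hR n t (by linarith [abs_nonneg t]))

lemma summable_F2 (t : ℝ) :
    Summable (fun n : ℕ => ((2*n+1 : ℝ) * (((2*n : ℕ) : ℝ) * t^(2*n-1))) • aW A ψ n) := by
  have hR : 1 ≤ |t| + 1 := by linarith [abs_nonneg t]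
  exact Summable.of_norm_bounded (summable_u A ψ (|t|+1))
    (fun n => norm_term_F2_le A ψ (|t|+1) hR n t (by linarith [abs_nonneg t]))

lemma hasDerivAt_F (t : ℝ) :
    HasDerivAt (fun s : ℝ => ∑' n : ℕ, s^(2*n+1) • aW A ψ n)
      (∑' n : ℕ, ((2*n+1 : ℝ) * t^(2*n)) • aW A ψ n) t := by
  set R := |t| + 1 with hRdef
  have hR : 1 ≤ R := by rw [hRdef]; linarith [abs_nonneg t]
  have htR : t ∈ Set.Ioo (-R) R := by
    constructor <;> [nlinarith [abs_nonneg t, neg_abs_le t]; nlinarith [le_abs_self t]]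
  apply hasDerivAt_tsum_of_isPreconnected (summable_u A ψ R)
    (isOpen_Ioo (a := -R) (b := R)) isPreconnected_Ioo
    (g := fun (n : ℕ) (s : ℝ) => s^(2*n+1) • aW A ψ n)
    (g' := fun (n : ℕ) (s : ℝ) => ((2*n+1 : ℝ) * s^(2*n)) • aW A ψ n)
    (y₀ := t) ?_ ?_ htR ?_ htR
  · intro n y _
    have := (hasDerivAt_pow (2*n+1) y).smul_const (aW A ψ n)
    convert this using 2
    push_cast; ring
  · intro n y hy
    refine norm_term_F1_le A ψ R hR n y ?_
    rw [abs_le]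
    exact ⟨hy.1.le, hy.2.le⟩
  · exact summable_F A ψ t

lemma hasDerivAt_F1 (t : ℝ) :
    HasDerivAt (fun s : ℝ => ∑' n : ℕ, ((2*n+1 : ℝ) * s^(2*n)) • aW A ψ n)
      (∑' n : ℕ, ((2*n+1 : ℝ) * (((2*n : ℕ) : ℝ) * t^(2*n-1))) • aW A ψ n) t := by
  set R := |t| + 1 with hRdef
  have hR : 1 ≤ R := by rw [hRdef]; linarith [abs_nonneg t]
  have htR : t ∈ Set.Ioo (-R) R := by
    constructor <;> [nlinarith [abs_nonneg t, neg_abs_le t]; nlinarith [le_abs_self t]]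
  apply hasDerivAt_tsum_of_isPreconnected (summable_u A ψ R)
    (isOpen_Ioo (a := -R) (b := R)) isPreconnected_Ioo
    (g := fun (n : ℕ) (s : ℝ) => ((2*n+1 : ℝ) * s^(2*n)) • aW A ψ n)
    (g' := fun (n : ℕ) (s : ℝ) => ((2*n+1 : ℝ) * (((2*n : ℕ) : ℝ) * s^(2*n-1))) • aW A ψ n)
    (y₀ := t) ?_ ?_ htR ?_ htR
  · intro n y _
    exact ((hasDerivAt_pow (2*n) y).const_mul ((2*n+1 : ℝ))).smul_const (aW A ψ n)
  · intro n y hy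
    refine norm_term_F2_le A ψ R hR n y ?_
    rw [abs_le]
    exact ⟨hy.1.le, hy.2.le⟩
  · exact summable_F1 A ψ t

end deriv

theorem abstract_wave_solution
    {H : Type*} [NormedAddCommGroup H] [InnerProductSpace ℂ H] [CompleteSpace H]
    (e : HilbertBasis ℕ ℂ H) (A : H →L[ℂ] H) (lam : ℕ → ℝ)
    (hlam : ∀ j, 0 ≤ lam j)
    (hA : ∀ j, A (e j) = (lam j : ℂ) • e j) :
    ∀ ψ : H,
      (∀ t : ℝ, Summable (fun j : ℕ =>
        ((waveKernel (lam j) t : ℂ) * ⟪e j, ψ⟫_ℂ) • e j)) ∧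
      (let E : ℝ → H := fun t => ∑' j : ℕ,
        ((waveKernel (lam j) t : ℂ) * ⟪e j, ψ⟫_ℂ) • e j
       E 0 = 0 ∧ Differentiable ℝ E ∧ Differentiable ℝ (deriv E) ∧
        (∀ t : ℝ, deriv (deriv E) t = -(A (E t))) ∧
        HasDerivAt E ψ 0) := by
  intro ψ
  -- coefficient computation
  have hcoef : ∀ (t : ℝ) (j : ℕ),
      ⟪(e j : H), ∑' n : ℕ, t^(2*n+1) • aW A ψ n⟫_ℂ
        = (waveKernel (lam j) t : ℂ) * Inner.inner ℂ ((e j : H)) ψ := by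
    intro t j
    have h1 : HasSum (fun n : ℕ => ⟪(e j : H), t^(2*n+1) • aW A ψ n⟫_ℂ)
        ⟪(e j : H), ∑' n : ℕ, t^(2*n+1) • aW A ψ n⟫_ℂ :=
      (summable_F A ψ t).hasSum.mapL (innerSL ℂ (e j))
    have h2 : HasSum (fun n : ℕ => ((cR n * (lam j ^ n * t^(2*n+1)) : ℝ) : ℂ)
          * ⟪(e j : H), ψ⟫_ℂ)
        ((waveKernel (lam j) t : ℂ) * ⟪(e j : H), ψ⟫_ℂ) :=
      ((hasSum_waveKernel (lam j) t (hlam j)).mapL Complex.ofRealCLM).mul_right _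
    have h3 : (fun n : ℕ => ⟪(e j : H), t^(2*n+1) • aW A ψ n⟫_ℂ)
        = fun n : ℕ => ((cR n * (lam j ^ n * t^(2*n+1)) : ℝ) : ℂ) * ⟪(e j : H), ψ⟫_ℂ := by
      funext n
      show ⟪(e j : H), t^(2*n+1) • (cR n • ((A^n) ψ))⟫_ℂ = _
      rw [← algebraMap_smul ℂ (t^(2*n+1)), ← algebraMap_smul ℂ (cR n),
        inner_smul_right, inner_smul_right, inner_basis_pow e A lam hA ψ j n]
      rw [Complex.coe_algebraMap]
      push_cast
      ring
    rw [h3] at h1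
    exact h1.unique h2
  have hSumE : ∀ t : ℝ, HasSum (fun j : ℕ =>
      ((waveKernel (lam j) t : ℂ) * ⟪e j, ψ⟫_ℂ) • (e j : H))
      (∑' n : ℕ, t^(2*n+1) • aW A ψ n) := by
    intro t
    have h0 := e.hasSum_repr (∑' n : ℕ, t^(2*n+1) • aW A ψ n)
    have h1 : (fun j : ℕ => e.repr (∑' n : ℕ, t^(2*n+1) • aW A ψ n) j • (e j : H))
        = fun j : ℕ => ((waveKernel (lam j) t : ℂ) * ⟪e j, ψ⟫_ℂ) • (e j : H) := by
      funext j
      rw [e.repr_apply_apply, hcoef t j]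
    rwa [h1] at h0
  refine ⟨fun t => (hSumE t).summable, ?_⟩
  intro E
  have hEF : E = fun t : ℝ => ∑' n : ℕ, t^(2*n+1) • aW A ψ n :=
    funext fun t => (hSumE t).tsum_eq
  have hdE : deriv E = fun t : ℝ => ∑' n : ℕ, ((2*n+1 : ℝ) * t^(2*n)) • aW A ψ n := by
    funext t
    rw [hEF]
    exact (hasDerivAt_F A ψ t).deriv
  have hzero : ∀ n : ℕ, ((0:ℝ))^(2*n+1) = 0 := fun n => zero_pow (by omega)
  refine ⟨?_, ?_, ?_, ?_, ?_⟩
  · rw [hEF]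
    simp [hzero]
  · rw [hEF]
    exact fun t => (hasDerivAt_F A ψ t).differentiableAt
  · rw [hdE]
    exact fun t => (hasDerivAt_F1 A ψ t).differentiableAt
  · intro t
    rw [hdE, (hasDerivAt_F1 A ψ t).deriv, hEF]
    -- F2 t = -(A (F t))
    have hAF : A (∑' n : ℕ, t^(2*n+1) • aW A ψ n)
        = ∑' n : ℕ, t^(2*n+1) • (cR n • ((A^(n+1)) ψ)) := by
      rw [A.map_tsum (summable_F A ψ t)]
      congr 1
      funext n
      rw [ContinuousLinearMap.map_smul_of_tower]
      show t^(2*n+1) • A (cR n • ((A^n) ψ)) = _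
      rw [ContinuousLinearMap.map_smul_of_tower, ← ContinuousLinearMap.mul_apply, ← pow_succ']
    rw [hAF, ← tsum_neg, Summable.tsum_eq_zero_add (summable_F2 A ψ t)]
    have h00 : ((2*(0:ℕ)+1 : ℝ) * (((2*(0:ℕ) : ℕ) : ℝ) * t^(2*(0:ℕ)-1))) • aW A ψ 0 = 0 := by
      norm_num
    rw [h00, zero_add]
    congr 1
    funext n
    simp only [aW, smul_smul, ← neg_smul]
    rw [show 2*(n+1)-1 = 2*n+1 from by omega]
    congr 1
    have hfac : ((2*(n+1)+1)! : ℝ) = (2*(n+1)+1) * (2*(n+1)) * (2*n+1)! := by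
      have : 2*(n+1)+1 = (2*n+1) + 1 + 1 := by omega
      rw [this, Nat.factorial_succ, Nat.factorial_succ]
      push_cast
      ring
    rw [cR, cR, hfac, pow_succ]
    have hne1 : (2*(n:ℝ)+2+1 : ℝ) ≠ 0 := by positivity
    have hne2 : (2*(n:ℝ)+2 : ℝ) ≠ 0 := by positivity
    have hne3 : ((2*n+1)! : ℝ) ≠ 0 := by positivity
    push_cast
    field_simp
    ring
  · rw [hEF]
    have h1 := hasDerivAt_F A ψ 0
    have h2 : (∑' n : ℕ, ((2*n+1 : ℝ) * (0:ℝ)^(2*n)) • aW A ψ n) = ψ := by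
      rw [tsum_eq_single 0]
      · simp [aW, cR]
      · intro n hn
        rw [zero_pow (by omega : 2*n ≠ 0)]
        simp
    rwa [h2] at h1
end
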